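/- Let N ≥ 1 and let A be an N×N integer matrix that is a generalized Cartan matrix (A_{ii} = 2 for all i; A_{ij} ≤ 0 for all i ≠ j; and A_{ij} = 0 if and only if A_{ji} = 0) and indecomposable (there is no partition of the index set into two nonempty subsets I and J with A_{ij} = 0 for all i ∈ I and j ∈ J). Suppose δ ∈ ℤ^N has all entries strictly positive and Aδ = 0. Then every m ∈ ℤ^N satisfying (Am)_i ≥ 0 for all i satisfies Am = 0, and moreover m is a rational multiple of δ. -/

import Mathlib

/-- let `A` be an indecomposable generalized Cartan matrix admitting a
strictly positive integer null vector `δ` (so `A` is of affine type). Then every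
`m ∈ ℤ^N` with `Am ≥ 0` componentwise satisfies `Am = 0`, and `m` is a rational
multiple of `δ`. -/
theorem stmt_1 (N : ℕ) (hN : 1 ≤ N) (A : Matrix (Fin N) (Fin N) ℤ)
    (hdiag : ∀ i, A i i = 2)
    (hoff : ∀ i j, i ≠ j → A i j ≤ 0)
    (hzero : ∀ i j, A i j = 0 ↔ A j i = 0)
    (hind : ¬∃ I J : Set (Fin N), I.Nonempty ∧ J.Nonempty ∧ I ∩ J = ∅ ∧
      I ∪ J = Set.univ ∧ ∀ i ∈ I, ∀ j ∈ J, A i j = 0)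
    (δ : Fin N → ℤ) (hδpos : ∀ i, 0 < δ i) (hδ : A.mulVec δ = 0)
    (m : Fin N → ℤ) (hm : ∀ i, 0 ≤ A.mulVec m i) :
    A.mulVec m = 0 ∧ ∃ q : ℚ, ∀ i, (m i : ℚ) = q * (δ i : ℚ) := by
  have hne : Nonempty (Fin N) := ⟨⟨0, hN⟩⟩
  have hδQpos : ∀ i, (0 : ℚ) < (δ i : ℚ) := fun i => by exact_mod_cast hδpos i
  have hδQne : ∀ i, (δ i : ℚ) ≠ 0 := fun i => ne_of_gt (hδQpos i)
  -- row sums against δ vanish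
  have hδQ : ∀ i, ∑ j, (A i j : ℚ) * (δ j : ℚ) = 0 := by
    intro i
    have h := congrFun hδ i
    simp only [Matrix.mulVec, dotProduct, Pi.zero_apply] at h
    have : ((∑ j, A i j * δ j : ℤ) : ℚ) = 0 := by rw [h]; norm_num
    push_cast at this
    exact this
  set c : Fin N → ℚ := fun i => (m i : ℚ) / (δ i : ℚ) with hc
  have hmc : ∀ i, (m i : ℚ) = c i * (δ i : ℚ) := fun i => by
    rw [hc]; rw [div_mul_cancel₀ _ (hδQne i)]
  obtain ⟨i₀, hi₀⟩ := Finite.exists_min c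
  set q : ℚ := c i₀ with hq
  -- key closure property at minimizers
  have key : ∀ i, c i = q → ∀ j, A i j ≠ 0 → c j = q := by
    intro i hi j hAij
    have hsum0 : ∑ k, (A i k : ℚ) * (δ k : ℚ) * q = 0 := by
      rw [← Finset.sum_mul, hδQ i, zero_mul]
    have hsum : ∑ k, (A i k : ℚ) * (δ k : ℚ) * (c k - q)
        = ∑ k, (A i k : ℚ) * (m k : ℚ) := by
      calc ∑ k, (A i k : ℚ) * (δ k : ℚ) * (c k - q)
          = ∑ k, ((A i k : ℚ) * (δ k : ℚ) * c k - (A i k : ℚ) * (δ k : ℚ) * q) := by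
            apply Finset.sum_congr rfl; intro k _; ring
        _ = (∑ k, (A i k : ℚ) * (δ k : ℚ) * c k)
            - ∑ k, (A i k : ℚ) * (δ k : ℚ) * q := Finset.sum_sub_distrib _ _
        _ = ∑ k, (A i k : ℚ) * (m k : ℚ) := by
            rw [hsum0, sub_zero]
            apply Finset.sum_congr rfl; intro k _
            rw [hmc k]; ring
    have hge : (0 : ℚ) ≤ ∑ k, (A i k : ℚ) * (m k : ℚ) := by
      have h := hm i
      simp only [Matrix.mulVec, dotProduct] at h
      exact_mod_cast h
    have hterm : ∀ k ∈ Finset.univ, (A i k : ℚ) * (δ k : ℚ) * (c k - q) ≤ 0 := by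
      intro k _
      by_cases hk : k = i
      · subst hk; rw [hi]; simp
      · have h1 : (A i k : ℚ) ≤ 0 := by exact_mod_cast hoff i k (Ne.symm hk)
        have h2 : (0 : ℚ) ≤ c k - q := sub_nonneg.mpr (hi₀ k)
        have h3 : (A i k : ℚ) * (δ k : ℚ) ≤ 0 :=
          mul_nonpos_of_nonpos_of_nonneg h1 (le_of_lt (hδQpos k))
        exact mul_nonpos_of_nonpos_of_nonneg h3 h2
    have hle : ∑ k, (A i k : ℚ) * (δ k : ℚ) * (c k - q) ≤ 0 :=
      Finset.sum_nonpos hterm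
    have hzero' : ∑ k, (A i k : ℚ) * (δ k : ℚ) * (c k - q) = 0 :=
      le_antisymm hle (hsum ▸ hge)
    have heach := (Finset.sum_eq_zero_iff_of_nonpos hterm).mp hzero' j (Finset.mem_univ j)
    have hAQ : (A i j : ℚ) ≠ 0 := by exact_mod_cast hAij
    have : c j - q = 0 := by
      rcases mul_eq_zero.mp heach with h | h
      · exact absurd (mul_eq_zero.mp h) (by push_neg; exact ⟨hAQ, hδQne j⟩)
      · exact h
    linarith [sub_eq_zero.mp this]
  -- c is constant by indecomposability
  have hall : ∀ i, c i = q := by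
    by_contra h
    push_neg at h
    obtain ⟨j, hj⟩ := h
    apply hind
    refine ⟨{i | c i = q}, {i | c i ≠ q}, ⟨i₀, rfl⟩, ⟨j, hj⟩, ?_, ?_, ?_⟩
    · rw [Set.eq_empty_iff_forall_notMem]
      intro x hx
      exact hx.2 hx.1
    · rw [Set.eq_univ_iff_forall]
      intro x
      by_cases hx : c x = q
      · exact Or.inl hx
      · exact Or.inr hx
    · intro a ha b hb
      by_contra hA
      exact hb (key a ha b hA)
  have hmq : ∀ i, (m i : ℚ) = q * (δ i : ℚ) := fun i => by
    rw [hmc i, hall i]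
  constructor
  · funext i
    have hQ : ∑ k, (A i k : ℚ) * (m k : ℚ) = 0 := by
      calc ∑ k, (A i k : ℚ) * (m k : ℚ)
          = q * ∑ k, (A i k : ℚ) * (δ k : ℚ) := by
            rw [Finset.mul_sum]
            apply Finset.sum_congr rfl; intro k _; rw [hmq k]; ring
        _ = 0 := by rw [hδQ i, mul_zero]
    have : ((∑ k, A i k * m k : ℤ) : ℚ) = 0 := by push_cast; exact hQ
    have hz : (∑ k, A i k * m k : ℤ) = 0 := by exact_mod_cast this
    simpa [Matrix.mulVec, dotProduct] using hz
  · exact ⟨q, hmq⟩
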